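/- Let V and W be finite-dimensional real vector spaces with dim V = q + 1, q ≥ 3, and let δ : V × V → W be an alternating bilinear map such that the span of its image {δ(x, y) : x, y ∈ V} has dimension q. Let B ⊆ V be a q-dimensional subspace such that every nonzero b ∈ B has degree 1, i.e. the linear map y ↦ δ(b, y) has rank exactly 1. Then δ vanishes identically on B × B. -/
import Mathlib


/-- STATEMENT 5 (linear-algebra content of Proposition 2.7, 2) ⇒ 3)):
if `dim V = q+1` with `q ≥ 3`, the image of the alternating bilinear map `δ` spans a
`q`-dimensional subspace of `W`, and every nonzero element of a `q`-dimensional subspace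
`B ⊆ V` has degree `1`, then `δ` vanishes identically on `B × B`. -/
theorem structure_tensor_vanishes_on_singular_subbundle
    (V W : Type*)
    [AddCommGroup V] [Module ℝ V] [FiniteDimensional ℝ V]
    [AddCommGroup W] [Module ℝ W] [FiniteDimensional ℝ W]
    (q : ℕ) (hq : 3 ≤ q) (hV : Module.finrank ℝ V = q + 1)
    (δ : V →ₗ[ℝ] V →ₗ[ℝ] W)
    (halt : ∀ x : V, δ x x = 0)
    (himage : Module.finrank ℝ
      (Submodule.span ℝ {w : W | ∃ x y : V, w = δ x y}) = q)
    (B : Submodule ℝ V) (hB : Module.finrank ℝ B = q)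
    (hdeg : ∀ b ∈ B, b ≠ 0 → Module.finrank ℝ (LinearMap.range (δ b)) = 1) :
    ∀ b ∈ B, ∀ b' ∈ B, δ b b' = 0 := by
  by_contra hcon
  push_neg at hcon
  obtain ⟨b₀, hb₀, b₀', hb₀', hne⟩ := hcon
  -- skew symmetry
  have hskew : ∀ x y : V, δ y x = - δ x y := by
    intro x y
    have h := halt (x + y)
    simp only [map_add, LinearMap.add_apply, halt, zero_add, add_zero] at h
    exact eq_neg_of_add_eq_zero_left h
  -- a nonzero element of the range of δ b spans the range
  have hline : ∀ b ∈ B, b ≠ 0 → ∀ w : W, w ∈ LinearMap.range (δ b) → w ≠ 0 →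
      LinearMap.range (δ b) = Submodule.span ℝ {w} := by
    intro b hb hb0 w hw hw0
    refine (Submodule.eq_of_le_of_finrank_le (Submodule.span_le.2 ?_) ?_).symm
    · simpa using hw
    · rw [hdeg b hb hb0, finrank_span_singleton hw0]
  set L := Submodule.span ℝ {δ b₀ b₀'} with hLdef
  have hb₀0 : b₀ ≠ 0 := by rintro rfl; simp at hne
  have hb₀'0 : b₀' ≠ 0 := by rintro rfl; simp at hne
  have hr₀ : LinearMap.range (δ b₀) = L :=
    hline _ hb₀ hb₀0 _ ⟨b₀', rfl⟩ hne
  have hr₀' : LinearMap.range (δ b₀') = L := by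
    refine hline _ hb₀' hb₀'0 _ ⟨-b₀, ?_⟩ hne
    rw [map_neg, hskew b₀ b₀', neg_neg]
  -- key: everything δ b, b ∈ B, lands in L
  have key : ∀ b ∈ B, ∀ y : V, δ b y ∈ L := by
    intro b hb y
    by_cases hb0 : b = 0
    · simp [hb0]
    by_cases h1 : δ b b₀' = 0
    · -- use b + b₀
      have hsum : b + b₀ ∈ B := B.add_mem hb hb₀
      have hval : δ (b + b₀) b₀' = δ b₀ b₀' := by
        simp [map_add, h1]
      have hsum0 : b + b₀ ≠ 0 := by
        intro h
        apply hne
        rw [← hval, h, map_zero, LinearMap.zero_apply]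
      have hr : LinearMap.range (δ (b + b₀)) = L :=
        hline _ hsum hsum0 _ ⟨b₀', hval⟩ hne
      have hdec : δ b y = δ (b + b₀) y - δ b₀ y := by
        simp [map_add]
      rw [hdec]
      exact L.sub_mem (hr ▸ LinearMap.mem_range_self _ y)
        (hr₀ ▸ LinearMap.mem_range_self _ y)
    · -- range δ b = span {δ b b₀'} ≤ L
      have hr : LinearMap.range (δ b) = Submodule.span ℝ {δ b b₀'} :=
        hline b hb hb0 _ ⟨b₀', rfl⟩ h1
      have hmem : δ b b₀' ∈ L := by
        rw [← hr₀']
        exact ⟨-b, by rw [map_neg, hskew b b₀', neg_neg]⟩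
      have hle : LinearMap.range (δ b) ≤ L := by
        rw [hr]
        exact Submodule.span_le.2 (by simpa using hmem)
      exact hle (LinearMap.mem_range_self _ y)
  -- pick v ∉ B
  obtain ⟨v, hv⟩ : ∃ v : V, v ∉ B := by
    by_contra h
    push_neg at h
    have hBtop : B = ⊤ := Submodule.eq_top_iff'.2 h
    rw [hBtop, finrank_top] at hB
    omega
  have hlt : B < B ⊔ Submodule.span ℝ {v} := by
    refine lt_of_le_of_ne le_sup_left ?_
    intro h
    apply hv
    rw [h]
    exact Submodule.mem_sup_right (Submodule.mem_span_singleton_self v)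
  have hsupeq : B ⊔ Submodule.span ℝ {v} = ⊤ := by
    apply Submodule.eq_top_of_finrank_eq
    have h1 : Module.finrank ℝ B < Module.finrank ℝ (B ⊔ Submodule.span ℝ {v} : Submodule ℝ V) :=
      Submodule.finrank_lt_finrank_of_lt hlt
    have h2 : Module.finrank ℝ (B ⊔ Submodule.span ℝ {v} : Submodule ℝ V)
        ≤ Module.finrank ℝ V := Submodule.finrank_le _
    omega
  have decomp : ∀ x : V, ∃ b ∈ B, ∃ t : ℝ, x = b + t • v := by
    intro x
    have hx : x ∈ B ⊔ Submodule.span ℝ {v} := hsupeq ▸ Submodule.mem_top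
    obtain ⟨b, hb, z, hz, hbz⟩ := Submodule.mem_sup.1 hx
    obtain ⟨t, rfl⟩ := Submodule.mem_span_singleton.1 hz
    exact ⟨b, hb, t, hbz.symm⟩
  -- image span is contained in L
  have himL : Submodule.span ℝ {w : W | ∃ x y : V, w = δ x y} ≤ L := by
    rw [Submodule.span_le]
    rintro w ⟨x, y, rfl⟩
    obtain ⟨bx, hbx, t, rfl⟩ := decomp x
    obtain ⟨by', hby', s, rfl⟩ := decomp y
    have hexp : δ (bx + t • v) (by' + s • v)
        = δ bx by' + s • δ bx v + (t • (- δ by' v) + (s * t) • δ v v) := by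
      simp only [map_add, map_smul, LinearMap.add_apply, LinearMap.smul_apply,
        smul_add, smul_smul, ← hskew]
      abel
    rw [hexp, halt, smul_zero, add_zero]
    exact L.add_mem (L.add_mem (key bx hbx by') (L.smul_mem _ (key bx hbx v)))
      (L.smul_mem _ (L.neg_mem (key by' hby' v)))
  have hfin : q ≤ 1 := by
    have h1 : Module.finrank ℝ L = 1 := finrank_span_singleton hne
    have h2 := Submodule.finrank_mono himL
    rw [himage, h1] at h2
    exact h2
  omega
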